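/- Let Y ∈ ℝ^{n₁×n₂} have rank r, let I, J be index sets of size r with Y(I,J) invertible, and suppose Y(:,J) = Q R is a QR decomposition with Q ∈ ℝ^{n₁×r} having orthonormal columns and R invertible. Then Q(I,:) is invertible and Y = Q · Q(I,:)^{-1} · Y(I,:). -/
import Mathlib


open Matrix

/-- Let `Y` have rank `r`, let `I`, `J` (encoded by injective maps `g`, `h`) be
index sets of size `r` with `Y(I,J)` invertible, and suppose `Y(:,J) = Q R` is
a QR decomposition with `Q` having orthonormal columns and `R` invertible.
Then `Q(I,:)` is invertible and `Y = Q · Q(I,:)⁻¹ · Y(I,:)`. -/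
theorem cur_qr_stabilized
    {n₁ n₂ r : ℕ} (Y : Matrix (Fin n₁) (Fin n₂) ℝ)
    (hrank : Y.rank = r)
    (g : Fin r → Fin n₁) (hg : Function.Injective g)
    (h : Fin r → Fin n₂) (hh : Function.Injective h)
    (hInv : IsUnit (Y.submatrix g h))
    (Q : Matrix (Fin n₁) (Fin r) ℝ) (R : Matrix (Fin r) (Fin r) ℝ)
    (hQ : Qᵀ * Q = 1) (hR : IsUnit R)
    (hQR : Y.submatrix id h = Q * R) :
    IsUnit (Q.submatrix g id) ∧
    Y = Q * (Q.submatrix g id)⁻¹ * Y.submatrix g id := by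
  -- notation
  set Qg := Q.submatrix g id with hQg_def
  -- row-selection commutes with multiplication
  have hsubmul : ∀ {p : Type} [Fintype p] (A : Matrix (Fin n₁) (Fin r) ℝ)
      (B : Matrix (Fin r) p ℝ), (A * B).submatrix g id = A.submatrix g id * B := by
    intro p _ A B
    rw [Matrix.submatrix_mul A B g id id Function.bijective_id, Matrix.submatrix_id_id]
  -- Y(I,J) = Q(I,:) * R
  have hYgh : Y.submatrix g h = Qg * R := by
    have : Y.submatrix g h = (Y.submatrix id h).submatrix g id := by
      rw [Matrix.submatrix_submatrix]; rfl
    rw [this, hQR, hsubmul]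
  -- Q(I,:) is invertible
  have hQgUnit : IsUnit Qg := by
    rw [Matrix.isUnit_iff_isUnit_det] at hInv ⊢
    rw [hYgh, Matrix.det_mul] at hInv
    exact isUnit_of_mul_isUnit_left hInv
  refine ⟨hQgUnit, ?_⟩
  -- column space of Y(:,J) is contained in that of Y
  have hle : LinearMap.range (Y.submatrix id h).mulVecLin ≤ LinearMap.range Y.mulVecLin := by
    rintro x ⟨v, rfl⟩
    refine ⟨fun j => ∑ k, if h k = j then v k else 0, ?_⟩
    funext i
    simp only [Matrix.mulVecLin_apply, Matrix.mulVec, dotProduct,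
      Matrix.submatrix_apply, id_eq]
    simp only [Finset.mul_sum, mul_ite, mul_zero]
    rw [Finset.sum_comm]
    simp [Finset.sum_ite_eq']
  -- rank comparison: rank Y(:,J) ≥ r
  have hEr : (Y.submatrix g h) = ((1 : Matrix (Fin n₁) (Fin n₁) ℝ).submatrix g id) *
      (Y.submatrix id h) := by
    ext i j
    simp [Matrix.mul_apply, Matrix.one_apply, Matrix.submatrix_apply]
  have hrankJ : r ≤ (Y.submatrix id h).rank := by
    have h1 : (Y.submatrix g h).rank = r := by
      rw [Matrix.rank_of_isUnit _ hInv, Fintype.card_fin]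
    calc r = (Y.submatrix g h).rank := h1.symm
      _ ≤ (Y.submatrix id h).rank := by
          rw [hEr]; exact Matrix.rank_mul_le_right _ _
  -- hence the column spaces coincide
  have heq : LinearMap.range (Y.submatrix id h).mulVecLin = LinearMap.range Y.mulVecLin := by
    apply Submodule.eq_of_le_of_finrank_le hle
    have : Module.finrank ℝ (LinearMap.range Y.mulVecLin) = Y.rank := rfl
    rw [this, hrank]
    exact hrankJ
  -- key identity: Q * (Qᵀ * Y) = Y
  have hQQY : Q * (Qᵀ * Y) = Y := by
    have hcols : ∀ x : Fin n₂ → ℝ, (Q * (Qᵀ * Y)) *ᵥ x = Y *ᵥ x := by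
      intro x
      have hx : Y *ᵥ x ∈ LinearMap.range (Y.submatrix id h).mulVecLin := by
        rw [heq]; exact ⟨x, rfl⟩
      obtain ⟨v, hv⟩ := hx
      simp only [Matrix.mulVecLin_apply] at hv
      have : (Q * (Qᵀ * Y)) *ᵥ x = (Q * Qᵀ) *ᵥ (Y *ᵥ x) := by
        rw [Matrix.mulVec_mulVec, Matrix.mul_assoc]
      rw [this, ← hv, hQR, Matrix.mulVec_mulVec, ← Matrix.mul_assoc, Matrix.mul_assoc Q Qᵀ Q,
        hQ, Matrix.mul_one]
    ext i j
    have := congrFun (hcols (Pi.single j 1)) i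
    simpa [Matrix.mulVec_single] using this
  -- conclude
  have hYg : Y.submatrix g id = Qg * (Qᵀ * Y) := by
    conv_lhs => rw [← hQQY]
    rw [hsubmul]
  rw [hYg, Matrix.mul_assoc, ← Matrix.mul_assoc (Qg⁻¹), Matrix.nonsing_inv_mul _
    ((Matrix.isUnit_iff_isUnit_det _).mp hQgUnit), Matrix.one_mul, hQQY]
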